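/- arXiv:2312.06513 — 3 statements merged into one kernel-verified Lean document; each statement's English description precedes it below -/
import Mathlib

section
/- Let n ≥ 1 and suppose that for each pair 1 ≤ i < j ≤ n we are given m_{ij} ∈ ℝ ∪ {−∞} and M_{ij} ∈ ℝ ∪ {+∞} with m_{ij} < M_{ij}. Then there exists a point x ∈ ℝⁿ with x₁ + x₂ + ⋯ + x_n = 0 satisfying m_{ij} < x_i − x_j < M_{ij} for all 1 ≤ i < j ≤ n if and only if the associated weighted digraph is m-acyclic, i.e., contains no directed cycle whose total edge weight is nonnegative. -/
/-- Cyclically consecutive pairs along a list of vertices. -/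
def cpairs {n : ℕ} (c : List (Fin n)) : List (Fin n × Fin n) := c.zip (c.rotate 1)

/-- `c` is a directed cycle of the weighted digraph with (extended-real) weight
function `w`, an edge `u → v` being present when `w u v ≠ ⊥`. -/
def IsCycleE {n : ℕ} (w : Fin n → Fin n → EReal) (c : List (Fin n)) : Prop :=
  2 ≤ c.length ∧ c.Nodup ∧ ∀ p ∈ cpairs c, w p.1 p.2 ≠ ⊥

/-- Total weight of the edges of a cycle. -/
noncomputable def cycWeightE {n : ℕ} (w : Fin n → Fin n → EReal) (c : List (Fin n)) : EReal :=
  ((cpairs c).map fun p => w p.1 p.2).sum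

/-- A weighted digraph is `m`-acyclic if it has no directed cycle of
nonnegative total weight. -/
def MAcyclicE {n : ℕ} (w : Fin n → Fin n → EReal) : Prop :=
  ∀ c : List (Fin n), IsCycleE w c → ¬ (0 ≤ cycWeightE w c)

/-- The weighted digraph associated to the system `m i j < x i - x j < M i j`
(`i < j`): an edge `i → j` of weight `m i j` when `m i j ≠ -∞`, and an edge
`j → i` of weight `-(M i j)` when `M i j ≠ +∞`. -/
noncomputable def assocW {n : ℕ} (m M : Fin n → Fin n → EReal) (u v : Fin n) : EReal :=
  if u < v then m u v else -(M v u)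

namespace StmtAux
open List in
section

open List

lemma zip_append_left {α β : Type*} :
    ∀ (l₂ : List β) (l₁ : List α) (t : List α), l₂.length ≤ l₁.length →
      (l₁ ++ t).zip l₂ = l₁.zip l₂
  | [], l₁, t, _ => by simp
  | b :: l₂, [], t, h => by simp at h
  | b :: l₂, a :: l₁, t, h => by
      simp only [cons_append, zip_cons_cons]
      rw [zip_append_left l₂ l₁ t (by simpa using h)]

lemma sum_map_zip_sub {n : ℕ} (x : Fin n → ℝ) :
    ∀ (l₁ l₂ : List (Fin n)), l₁.length = l₂.length →
      ((l₁.zip l₂).map fun p => x p.1 - x p.2).sum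
        = (l₁.map x).sum - (l₂.map x).sum
  | [], [], _ => by simp
  | [], _ :: _, h => by simp at h
  | _ :: _, [], h => by simp at h
  | a :: l₁, b :: l₂, h => by
      simp only [zip_cons_cons, map_cons, sum_cons]
      rw [sum_map_zip_sub x l₁ l₂ (by simpa using h)]
      ring

lemma sum_map_lt {α : Type*} (f g : α → ℝ) :
    ∀ l : List α, l ≠ [] → (∀ a ∈ l, f a < g a) → (l.map f).sum < (l.map g).sum
  | [], h, _ => absurd rfl h
  | [a], _, h => by simpa using h a (by simp)
  | a :: b :: l, _, h => by
      simp only [map_cons, sum_cons]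
      have h1 := h a (by simp)
      have h2 := sum_map_lt f g (b :: l) (by simp) (fun x hx => h x (mem_cons_of_mem a hx))
      simp only [map_cons, sum_cons] at h2
      exact add_lt_add h1 h2

lemma sum_map_le {α : Type*} (f : α → ℝ) (K : ℝ) :
    ∀ l : List α, (∀ a ∈ l, f a ≤ K) → (l.map f).sum ≤ l.length * K
  | [], _ => by simp
  | a :: l, h => by
      simp only [map_cons, sum_cons, length_cons]
      have h1 := sum_map_le f K l (fun x hx => h x (mem_cons_of_mem a hx))
      have h2 := h a mem_cons_self
      push_cast
      linarith

lemma sum_map_le_mem {α : Type*} (f : α → ℝ) (K : ℝ) (hK : 0 ≤ K) :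
    ∀ (l : List α) (x : α), x ∈ l → (∀ a ∈ l, f a ≤ K) →
      (l.map f).sum ≤ f x + l.length * K
  | [], x, hx, _ => absurd hx not_mem_nil
  | a :: l, x, hx, h => by
      simp only [map_cons, sum_cons, length_cons]
      rcases mem_cons.mp hx with rfl | hx'
      · have h1 := sum_map_le f K l (fun y hy => h y (mem_cons_of_mem x hy))
        push_cast
        linarith
      · have h1 := sum_map_le_mem f K hK l x hx' (fun y hy => h y (mem_cons_of_mem a hy))
        have h2 := h a mem_cons_self
        push_cast
        linarith

lemma sum_map_add_const {α : Type*} (f : α → ℝ) (ε : ℝ) :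
    ∀ l : List α, (l.map fun a => f a + ε).sum = (l.map f).sum + l.length * ε
  | [] => by simp
  | a :: l => by
      simp only [map_cons, sum_cons, length_cons, sum_map_add_const f ε l]
      push_cast
      ring

lemma sum_map_coe {α : Type*} (f : α → ℝ) (g : α → EReal) :
    ∀ l : List α, (∀ a ∈ l, g a = ((f a : ℝ) : EReal)) →
      (l.map g).sum = (((l.map f).sum : ℝ) : EReal)
  | [], _ => by simp
  | a :: l, h => by
      simp only [map_cons, sum_cons]
      rw [h a mem_cons_self, sum_map_coe f g l (fun x hx => h x (mem_cons_of_mem a hx))]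
      exact_mod_cast rfl

lemma cpairs_ne {n : ℕ} {L : List (Fin n)} (hd : L.Nodup) (hl : 2 ≤ L.length) :
    ∀ p ∈ cpairs L, p.1 ≠ p.2 := by
  intro p hp
  rw [cpairs] at hp
  obtain ⟨i, hi, hip⟩ := List.mem_iff_getElem.mp hp
  have hiz : i < L.length := lt_length_left_of_zip hi
  have hir : i < (L.rotate 1).length := lt_length_right_of_zip hi
  rw [getElem_zip] at hip
  intro hpe
  have h12 : L[i]'hiz = (L.rotate 1)[i]'hir := by
    rw [← hip] at hpe
    exact hpe
  rw [getElem_rotate] at h12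
  have := (List.Nodup.getElem_inj_iff hd).mp h12
  rcases Nat.lt_or_ge (i + 1) L.length with h | h
  · rw [Nat.mod_eq_of_lt h] at this; omega
  · have hi1 : i + 1 = L.length := by omega
    rw [hi1, Nat.mod_self] at this
    omega

noncomputable def pathW {n : ℕ} (r : Fin n → Fin n → ℝ) (p : List (Fin n)) : ℝ :=
  ((p.zip p.tail).map fun q => r q.1 q.2).sum

@[simp] lemma pathW_nil {n : ℕ} (r : Fin n → Fin n → ℝ) : pathW r [] = 0 := rfl

@[simp] lemma pathW_single {n : ℕ} (r : Fin n → Fin n → ℝ) (a : Fin n) :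
    pathW r [a] = 0 := rfl

lemma pathW_cons_cons {n : ℕ} (r : Fin n → Fin n → ℝ) (a b : Fin n) (l : List (Fin n)) :
    pathW r (a :: b :: l) = r a b + pathW r (b :: l) := rfl

lemma pathW_split {n : ℕ} (r : Fin n → Fin n → ℝ) (x : Fin n) (tl : List (Fin n)) :
    ∀ a : List (Fin n), pathW r (a ++ x :: tl) = pathW r (a ++ [x]) + pathW r (x :: tl)
  | [] => by simp
  | [h] => by
      simp only [cons_append, nil_append, pathW_cons_cons, pathW_single]
      ring
  | h :: h2 :: a => by
      have ih := pathW_split r x tl (h2 :: a)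
      simp only [cons_append] at ih ⊢
      rw [pathW_cons_cons, pathW_cons_cons, ih]
      ring

lemma cpairs_cons {n : ℕ} (a : Fin n) (l : List (Fin n)) :
    cpairs (a :: l) = (a :: l).zip (l ++ [a]) := by
  rw [cpairs, show (1 : ℕ) = 0 + 1 from rfl, rotate_cons_succ, rotate_zero]

lemma cycW_eq {n : ℕ} (r : Fin n → Fin n → ℝ) (a : Fin n) (l : List (Fin n)) :
    ((cpairs (a :: l)).map fun p => r p.1 p.2).sum = pathW r (a :: (l ++ [a])) := by
  rw [cpairs_cons]
  unfold pathW
  congr 2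
  show (a :: l).zip (l ++ [a]) = ((a :: l) ++ [a]).zip (l ++ [a])
  rw [zip_append_left (l ++ [a]) (a :: l) [a] (by simp)]


end
end StmtAux

open StmtAux List

theorem stmt0 (n : ℕ) (hn : 1 ≤ n) (m M : Fin n → Fin n → EReal)
    (hm : ∀ i j : Fin n, i < j → m i j ≠ ⊤)
    (hM : ∀ i j : Fin n, i < j → M i j ≠ ⊥)
    (hlt : ∀ i j : Fin n, i < j → m i j < M i j) :
    (∃ x : Fin n → ℝ, (∑ i, x i) = 0 ∧
      ∀ i j : Fin n, i < j →
        m i j < ((x i - x j : ℝ) : EReal) ∧ ((x i - x j : ℝ) : EReal) < M i j)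
    ↔ MAcyclicE (assocW m M) := by
  classical
  set w := assocW m M with hw
  have hwtop : ∀ u v : Fin n, u ≠ v → w u v ≠ ⊤ := by
    intro u v huv
    rw [hw, assocW]
    split
    · exact hm u v ‹u < v›
    · have hvu : v < u := lt_of_le_of_ne (not_lt.mp ‹¬ u < v›) huv.symm
      simp only [ne_eq, EReal.neg_eq_top_iff]
      exact hM v u hvu
  constructor
  · rintro ⟨x, -, hx⟩ L hL hge
    obtain ⟨hlen, hnd, hbot⟩ := hL
    have hne : ∀ p ∈ cpairs L, p.1 ≠ p.2 := cpairs_ne hnd hlen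
    have hterm : ∀ p ∈ cpairs L, w p.1 p.2 = (((w p.1 p.2).toReal : ℝ) : EReal) :=
      fun p hp => (EReal.coe_toReal (hwtop _ _ (hne p hp)) (hbot p hp)).symm
    have hsum : cycWeightE w L
        = ((((cpairs L).map fun p => (w p.1 p.2).toReal).sum : ℝ) : EReal) :=
      sum_map_coe _ _ _ hterm
    have hlt' : ∀ p ∈ cpairs L, (w p.1 p.2).toReal < x p.1 - x p.2 := by
      intro p hp
      have h1 : w p.1 p.2 < ((x p.1 - x p.2 : ℝ) : EReal) := by
        rcases lt_or_gt_of_ne (hne p hp) with h | h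
        · have : w p.1 p.2 = m p.1 p.2 := by rw [hw, assocW, if_pos h]
          rw [this]; exact (hx p.1 p.2 h).1
        · have hwv : w p.1 p.2 = -(M p.2 p.1) := by
            rw [hw, assocW, if_neg (not_lt.mpr h.le)]
          have h2 := (hx p.2 p.1 h).2
          rw [hwv]
          have h3 : -((x p.2 - x p.1 : ℝ) : EReal) = ((x p.1 - x p.2 : ℝ) : EReal) := by
            rw [← EReal.coe_neg, neg_sub]
          rw [← h3]
          exact EReal.neg_lt_neg_iff.mpr h2
      rw [hterm p hp] at h1
      exact_mod_cast h1
    have hlenc : (cpairs L).length = L.length := by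
      rw [cpairs, length_zip, length_rotate, min_self]
    have hnenil : cpairs L ≠ [] := by
      intro h
      rw [h] at hlenc
      simp at hlenc
      omega
    have hstrict := sum_map_lt _ _ (cpairs L) hnenil hlt'
    have htel : ((cpairs L).map fun p => x p.1 - x p.2).sum = 0 := by
      rw [cpairs, sum_map_zip_sub x L (L.rotate 1) (by rw [length_rotate])]
      rw [((L.rotate_perm 1).map x).sum_eq]
      ring
    rw [hsum] at hge
    have h0 : (0:ℝ) ≤ ((cpairs L).map fun p => (w p.1 p.2).toReal).sum :=
      EReal.coe_nonneg.mp hge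
    rw [htel] at hstrict
    linarith
  · intro hac
    set b : Fin n → Fin n → ℝ := fun u v => (w u v).toReal with hb
    have hfin : {L : List (Fin n) | IsCycleE w L}.Finite := by
      apply (List.finite_length_le (Fin n) n).subset
      intro L hL
      have := hL.2.1.length_le_card
      simpa using this
    set S : Set ℝ := (fun L => (cycWeightE w L).toReal) '' {L | IsCycleE w L} with hS
    have hSfin : S.Finite := hfin.image _
    have hcycreal : ∀ L : List (Fin n), IsCycleE w L →
        cycWeightE w L = ((((cpairs L).map fun p => b p.1 p.2).sum : ℝ) : EReal) := by
      intro L hL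
      exact sum_map_coe _ _ _ (fun p hp =>
        (EReal.coe_toReal (hwtop _ _ (cpairs_ne hL.2.1 hL.1 p hp)) (hL.2.2 p hp)).symm)
    have hSneg : ∀ s ∈ S, s < 0 := by
      rintro s ⟨L, hL, rfl⟩
      simp only [Set.mem_setOf_eq] at hL
      have h1 := hac L hL
      dsimp only
      rw [hcycreal L hL] at h1
      rw [hcycreal L hL, EReal.toReal_coe]
      by_contra hcon
      exact h1 (EReal.coe_nonneg.mpr (not_lt.mp hcon))
    set γ : ℝ := if hne : S.Nonempty then sSup S else -1 with hγ
    have hγneg : γ < 0 := by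
      rw [hγ]
      split
      · exact hSneg _ (Set.Nonempty.csSup_mem ‹_› hSfin)
      · norm_num
    have hγle : ∀ s ∈ S, s ≤ γ := by
      intro s hs
      rw [hγ, dif_pos ⟨s, hs⟩]
      exact le_csSup hSfin.bddAbove hs
    have hnpos : (0:ℝ) < n := by exact_mod_cast hn
    set ε : ℝ := -γ / (2 * n) with hε
    have hεpos : 0 < ε := by
      rw [hε]
      apply div_pos (by linarith) (by linarith)
    set Cb : ℝ := ∑ u : Fin n, ∑ v : Fin n, |b u v| with hCb
    have hCble : ∀ u v, b u v ≤ Cb := by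
      intro u v
      calc b u v ≤ |b u v| := le_abs_self _
        _ ≤ ∑ v' : Fin n, |b u v'| :=
            Finset.single_le_sum (f := fun v' => |b u v'|) (fun _ _ => abs_nonneg _)
              (Finset.mem_univ v)
        _ ≤ Cb :=
            Finset.single_le_sum (f := fun u => ∑ v' : Fin n, |b u v'|)
              (fun _ _ => Finset.sum_nonneg fun _ _ => abs_nonneg _) (Finset.mem_univ u)
    have hCb0 : 0 ≤ Cb := Finset.sum_nonneg fun _ _ => Finset.sum_nonneg fun _ _ => abs_nonneg _
    set K : ℝ := Cb + ε with hK
    have hK0 : 0 ≤ K := by rw [hK]; linarith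
    set B : ℝ := n * K + 1 with hB
    set r : Fin n → Fin n → ℝ := fun u v => if w u v = ⊥ then -B else b u v + ε with hr
    have hrK : ∀ u v, r u v ≤ K := by
      intro u v
      rw [hr]
      dsimp only
      split
      · have h0 : 0 ≤ (n:ℝ) * (Cb + ε) := mul_nonneg hnpos.le (by linarith)
        rw [hB, hK]
        linarith
      · rw [hK]
        linarith [hCble u v]
    have hrgt : ∀ u v : Fin n, u ≠ v → w u v < ((r u v : ℝ) : EReal) := by
      intro u v huv
      rw [hr]
      dsimp only
      split
      · rw [‹w u v = ⊥›]
        exact EReal.bot_lt_coe _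
      · have hcoe := EReal.coe_toReal (hwtop u v huv) ‹¬ w u v = ⊥›
        rw [← hcoe]
        exact_mod_cast lt_add_of_pos_right (b u v) hεpos
    -- every simple "cycle" has nonpositive perturbed weight
    have hcyc : ∀ (a : Fin n) (l : List (Fin n)), (a :: l).Nodup → l ≠ [] →
        ((cpairs (a :: l)).map fun p => r p.1 p.2).sum ≤ 0 := by
      intro a l hnd hlne
      have hlen : 2 ≤ (a :: l).length := by
        cases l with
        | nil => exact absurd rfl hlne
        | cons x xs => simp
      have hnec := cpairs_ne hnd hlen
      have hlenc : (cpairs (a :: l)).length = (a :: l).length := by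
        rw [cpairs, length_zip, length_rotate, min_self]
      have hlenn : ((cpairs (a :: l)).length : ℝ) ≤ n := by
        have h1 := hnd.length_le_card
        rw [hlenc]
        simp only [Fintype.card_fin] at h1
        exact_mod_cast h1
      by_cases hall : ∀ p ∈ cpairs (a :: l), w p.1 p.2 ≠ ⊥
      · have hcycw : IsCycleE w (a :: l) := ⟨hlen, hnd, hall⟩
        have hmem : (cycWeightE w (a :: l)).toReal ∈ S := ⟨a :: l, hcycw, rfl⟩
        set s : ℝ := ((cpairs (a :: l)).map fun p => b p.1 p.2).sum with hs
        have hsγ : s ≤ γ := by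
          have h2 := hγle _ hmem
          rwa [hcycreal _ hcycw, EReal.toReal_coe] at h2
        have heq : ((cpairs (a :: l)).map fun p => r p.1 p.2).sum
            = ((cpairs (a :: l)).map fun p => b p.1 p.2 + ε).sum := by
          apply congrArg
          apply map_congr_left
          intro p hp
          rw [hr]
          dsimp only
          rw [if_neg (hall p hp)]
        rw [heq, sum_map_add_const (fun p : Fin n × Fin n => b p.1 p.2) ε (cpairs (a :: l))]
        have h3 : ((cpairs (a :: l)).length : ℝ) * ε ≤ n * ε :=
          mul_le_mul_of_nonneg_right hlenn hεpos.le
        have h4 : (n:ℝ) * ε = -γ / 2 := by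
          rw [hε]
          field_simp
        rw [h4] at h3
        linarith
      · push_neg at hall
        obtain ⟨p, hp, hpbot⟩ := hall
        have hrp : r p.1 p.2 = -B := by rw [hr]; dsimp only; rw [if_pos hpbot]
        have hbound := sum_map_le_mem (fun q => r q.1 q.2) K hK0 (cpairs (a :: l)) p hp
          (fun q _ => hrK q.1 q.2)
        rw [hrp] at hbound
        have h3 : ((cpairs (a :: l)).length : ℝ) * K ≤ n * K :=
          mul_le_mul_of_nonneg_right hlenn hK0
        have hB' : B = n * K + 1 := hB
        linarith
    -- paths to the root
    set root : Fin n := ⟨0, hn⟩ with hroot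
    set Pa : Fin n → Set ℝ := fun v =>
      {t | ∃ p : List (Fin n), p.Nodup ∧ p.head? = some v ∧ p.getLast? = some root ∧
        pathW r p = t} with hPa
    have hPane : ∀ v, (Pa v).Nonempty := by
      intro v
      by_cases hv : v = root
      · exact ⟨pathW r [v], [v], by simp, rfl, by simp [hv], rfl⟩
      · exact ⟨pathW r [v, root], [v, root], by simp [hv], rfl, by simp, rfl⟩
    have hPble : ∀ v t, t ∈ Pa v → t ≤ n * K := by
      rintro v t ⟨p, hnd, -, -, rfl⟩
      have h1 := sum_map_le (fun q => r q.1 q.2) K (p.zip p.tail) (fun q _ => hrK q.1 q.2)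
      have h2 : (p.zip p.tail).length ≤ n := by
        rw [length_zip]
        have h3 := hnd.length_le_card
        simp only [Fintype.card_fin] at h3
        omega
      calc pathW r p ≤ (p.zip p.tail).length * K := h1
        _ ≤ n * K := mul_le_mul_of_nonneg_right (by exact_mod_cast h2) hK0
    have hPbdd : ∀ v, BddAbove (Pa v) := fun v => ⟨n * K, fun t ht => hPble v t ht⟩
    set d : Fin n → ℝ := fun v => sSup (Pa v) with hd
    have hdub : ∀ (u : Fin n) (t), t ∈ Pa u → t ≤ d u := by
      intro u t ht
      exact le_csSup (hPbdd u) ht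
    have hkey : ∀ u v : Fin n, u ≠ v → r u v + d v ≤ d u := by
      intro u v huv
      have hub : ∀ t ∈ Pa v, t ≤ d u - r u v := by
        rintro t ⟨p, hnd, hhead, hlast, rfl⟩
        obtain ⟨tl, rfl⟩ : ∃ tl, p = v :: tl := by
          cases p with
          | nil => simp at hhead
          | cons a tl =>
              simp only [head?_cons, Option.some.injEq] at hhead
              exact ⟨tl, by rw [hhead]⟩
        by_cases hu : u ∈ v :: tl
        · obtain ⟨p₁, p₂, hsplit⟩ := List.append_of_mem hu
          obtain ⟨p₁', rfl⟩ : ∃ p₁', p₁ = v :: p₁' := by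
            cases p₁ with
            | nil =>
                simp only [nil_append] at hsplit
                exact absurd ((List.cons.injEq _ _ _ _ ▸ hsplit).1.symm) huv
            | cons a p₁' =>
                have : a = v := by
                  have := congrArg List.head? hsplit
                  simpa using this.symm
                exact ⟨p₁', by rw [this]⟩
          have htl : tl = p₁' ++ u :: p₂ := by
            rw [cons_append] at hsplit
            exact (List.cons.injEq _ _ _ _ ▸ hsplit).2
          subst htl
          have hvi := nodup_cons.mp hnd
          have hvnotin : v ∉ p₁' ++ u :: p₂ := hvi.1
          have hnd' : (p₁' ++ u :: p₂).Nodup := hvi.2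
          have hnds := nodup_append.mp hnd'
          have hup : u ∉ p₁' := fun hmem => (hnds.2.2 u hmem u mem_cons_self rfl).elim
          have hcnd : (u :: v :: p₁').Nodup := by
            refine nodup_cons.mpr ⟨?_, nodup_cons.mpr ⟨?_, hnds.1⟩⟩
            · intro hmem
              rcases mem_cons.mp hmem with h | h
              · exact huv h
              · exact hup h
            · intro hmem
              exact hvnotin (mem_append.mpr (Or.inl hmem))
          have hcyc0 := hcyc u (v :: p₁') hcnd (cons_ne_nil v p₁')
          rw [cycW_eq r u (v :: p₁')] at hcyc0
          rw [show ((v :: p₁') ++ [u] : List (Fin n)) = v :: (p₁' ++ [u]) from rfl,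
            pathW_cons_cons] at hcyc0
          have e2 := pathW_split r u p₂ (v :: p₁')
          simp only [cons_append] at e2
          have hlast2 : (u :: p₂).getLast? = some root := by
            rw [show (v :: (p₁' ++ u :: p₂) : List (Fin n))
              = ([v] ++ p₁') ++ (u :: p₂) from by simp] at hlast
            rwa [getLast?_append_of_ne_nil _ (cons_ne_nil u p₂)] at hlast
          have hmem : pathW r (u :: p₂) ∈ Pa u := by
            exact ⟨u :: p₂, hnds.2.1, rfl, hlast2, rfl⟩
          have hle := hdub u _ hmem
          linarith
        · have hmem : pathW r (u :: v :: tl) ∈ Pa u := by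
            refine ⟨u :: v :: tl, nodup_cons.mpr ⟨hu, hnd⟩, rfl, ?_, rfl⟩
            rw [getLast?_cons_cons]
            exact hlast
          have hle := hdub u _ hmem
          rw [pathW_cons_cons] at hle
          linarith
      have h1 := csSup_le (hPane v) hub
      have h2 : d v ≤ d u - r u v := h1
      linarith
    set x : Fin n → ℝ := fun i => d i - (∑ j, d j) / n with hx
    refine ⟨x, ?_, ?_⟩
    · rw [hx]
      dsimp only
      rw [Finset.sum_sub_distrib, Finset.sum_const, Finset.card_univ, Fintype.card_fin]
      rw [nsmul_eq_mul]
      field_simp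
      ring
    · intro i j hij
      have hij' : i ≠ j := ne_of_lt hij
      have h1 : r i j + d j ≤ d i := hkey i j hij'
      have h2 : r j i + d i ≤ d j := hkey j i hij'.symm
      have hxij : x i - x j = d i - d j := by rw [hx]; ring
      have hxji : x j - x i = d j - d i := by rw [hx]; ring
      constructor
      · have hlt1 : w i j < ((r i j : ℝ) : EReal) := hrgt i j hij'
        have hwm : w i j = m i j := by rw [hw, assocW, if_pos hij]
        have hle : ((r i j : ℝ) : EReal) ≤ ((x i - x j : ℝ) : EReal) := by
          rw [hxij]
          exact_mod_cast (by linarith : r i j ≤ d i - d j)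
        rw [hwm] at hlt1
        exact lt_of_lt_of_le hlt1 hle
      · have hlt1 : w j i < ((x j - x i : ℝ) : EReal) := by
          refine lt_of_lt_of_le (hrgt j i hij'.symm) ?_
          rw [hxji]
          exact_mod_cast (by linarith : r j i ≤ d j - d i)
        have hwj : w j i = -(M i j) := by
          rw [hw, assocW, if_neg (not_lt.mpr hij.le)]
        rw [hwj] at hlt1
        have h3 := EReal.neg_lt_comm.mp hlt1
        rw [← EReal.coe_neg, neg_sub] at h3
        exact h3
end

section
/- Let n ≥ 1 and suppose that for each pair 1 ≤ i < j ≤ n we are given m_{ij} ∈ ℝ ∪ {−∞} and M_{ij} ∈ ℝ ∪ {+∞} with m_{ij} < M_{ij}. Then the set of points x ∈ ℝⁿ with x₁ + ⋯ + x_n = 0 satisfying m_{ij} < x_i − x_j < M_{ij} for all 1 ≤ i < j ≤ n is nonempty and bounded if and only if the associated weighted digraph is m-acyclic and strongly connected (every vertex can be reached from every other vertex along directed edges of the digraph). -/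
/-- real path weight along consecutive pairs -/
def pw {n : ℕ} (r : Fin n → Fin n → ℝ) (l : List (Fin n)) : ℝ :=
  ((l.zip l.tail).map fun p => r p.1 p.2).sum

/-- real cyclic weight -/
def cycw {n : ℕ} (r : Fin n → Fin n → ℝ) (c : List (Fin n)) : ℝ :=
  ((cpairs c).map fun p => r p.1 p.2).sum

lemma cpairs_cons {n : ℕ} (b : Fin n) (l : List (Fin n)) :
    cpairs (b :: l) = (b :: l).zip (l ++ [b]) := by
  have : (b :: l).rotate 1 = l ++ [b] := by
    rw [show (1:ℕ) = 0 + 1 from rfl, List.rotate_cons_succ, List.rotate_zero]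
  rw [cpairs, this]

lemma cpairs_length {n : ℕ} (c : List (Fin n)) : (cpairs c).length = c.length := by
  simp [cpairs]

lemma pw_nil {n : ℕ} (r : Fin n → Fin n → ℝ) : pw r [] = 0 := rfl
lemma pw_single {n : ℕ} (r : Fin n → Fin n → ℝ) (a : Fin n) : pw r [a] = 0 := rfl
lemma pw_cons {n : ℕ} (r : Fin n → Fin n → ℝ) (a b : Fin n) (l : List (Fin n)) :
    pw r (a :: b :: l) = r a b + pw r (b :: l) := by
  simp [pw]

lemma cycw_cons {n : ℕ} (r : Fin n → Fin n → ℝ) (b : Fin n) (l : List (Fin n)) :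
    cycw r (b :: l) = pw r (b :: (l ++ [b])) := by
  rw [cycw, cpairs_cons, pw]
  congr 1
  show ((b :: l).zip (l ++ [b])).map _ = (((b :: l) ++ [b]).zip (l ++ [b])).map _
  congr 1
  rw [show (l ++ [b] : List (Fin n)) = (l ++ [b]) ++ [] by simp,
    List.zip_append (by simp)]
  simp

lemma pw_cons_append {n : ℕ} (r : Fin n → Fin n → ℝ) (a : Fin n) (l2 : List (Fin n)) :
    ∀ (l1 : List (Fin n)) (b : Fin n),
      pw r (b :: (l1 ++ a :: l2)) = pw r (b :: (l1 ++ [a])) + pw r (a :: l2) := by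
  intro l1
  induction l1 with
  | nil => intro b; simp [pw_cons, pw_single]
  | cons c l1' ih =>
      intro b
      simp only [List.cons_append, pw_cons, ih c]
      ring

lemma lemB {n : ℕ} (r : Fin n → Fin n → ℝ)
    (H : ∀ c : List (Fin n), c.Nodup → 2 ≤ c.length → cycw r c ≤ 0) :
    ∃ x : Fin n → ℝ, ∀ u v, u ≠ v → r u v ≤ x u - x v := by
  classical
  have hfin : ∀ v : Fin n, {l : List (Fin n) | l.Nodup ∧ l.head? = some v}.Finite := by
    intro v
    apply (List.finite_length_le (Fin n) n).subset
    intro l hl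
    have := hl.1.length_le_card
    simpa using this
  have hex : ∀ v : Fin n, ∃ l, (l.Nodup ∧ l.head? = some v) ∧
      ∀ l', (l'.Nodup ∧ l'.head? = some v) → pw r l' ≤ pw r l := by
    intro v
    have hne : ((hfin v).toFinset).Nonempty :=
      ⟨[v], by simp⟩
    obtain ⟨l, hl, hmax⟩ := Finset.exists_max_image ((hfin v).toFinset) (pw r) hne
    rw [Set.Finite.mem_toFinset] at hl
    exact ⟨l, hl, fun l' hl' => hmax l' (by rwa [Set.Finite.mem_toFinset])⟩
  choose L hL hLmax using hex
  refine ⟨fun v => pw r (L v), ?_⟩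
  intro u v huv
  show r u v ≤ pw r (L u) - pw r (L v)
  obtain ⟨t, hlt⟩ : ∃ t, L v = v :: t := by
    rcases hLv : L v with _ | ⟨a, t⟩
    · exact absurd ((hL v).2) (by rw [hLv]; simp)
    · have := (hL v).2; rw [hLv] at this; simp at this
      exact ⟨t, by rw [this]⟩
  by_cases hu : u ∈ L v
  · obtain ⟨s1, s2, hsplit⟩ := List.append_of_mem hu
    obtain ⟨s1', hs1⟩ : ∃ s1', s1 = v :: s1' := by
      cases s1 with
      | nil => rw [hlt] at hsplit; simp at hsplit; exact absurd hsplit.1.symm huv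
      | cons a s1' =>
          rw [hlt] at hsplit; simp at hsplit
          exact ⟨s1', by rw [hsplit.1]⟩
    have hLveq : L v = v :: (s1' ++ u :: s2) := by
      rw [hsplit, hs1]; simp
    -- the cycle v :: s1' ++ [u]
    have hpre : List.Sublist (v :: (s1' ++ [u])) (L v) := by
      rw [hLveq]
      refine (List.IsPrefix.sublist ⟨s2, ?_⟩)
      simp
    have hcyc := H (v :: (s1' ++ [u])) (hpre.nodup (hL v).1) (by simp)
    rw [cycw_cons, show ((s1' ++ [u]) ++ [v] : List (Fin n)) = s1' ++ u :: [v] by simp,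
      pw_cons_append] at hcyc
    have hsuf : List.Sublist (u :: s2) (L v) := by
      rw [hsplit]
      exact (List.IsSuffix.sublist ⟨s1, rfl⟩)
    have hle : pw r (u :: s2) ≤ pw r (L u) :=
      hLmax u _ ⟨hsuf.nodup (hL v).1, by simp⟩
    have hdecomp : pw r (L v) = pw r (v :: (s1' ++ [u])) + pw r (u :: s2) := by
      rw [hLveq, pw_cons_append]
    have : pw r (u :: [v]) = r u v := by simp [pw_cons, pw_single]
    rw [this] at hcyc
    linarith
  · have hmem : ((u :: L v).Nodup ∧ (u :: L v).head? = some u) := by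
      refine ⟨?_, by simp⟩
      exact List.nodup_cons.mpr ⟨hu, (hL v).1⟩
    have hle : pw r (u :: L v) ≤ pw r (L u) := hLmax u _ hmem
    have : pw r (u :: L v) = r u v + pw r (L v) := by
      rw [hlt, pw_cons]
    linarith

lemma sum_map_add_const {α : Type*} (f : α → ℝ) (ε : ℝ) :
    ∀ l : List α, (l.map fun a => f a + ε).sum = (l.map f).sum + l.length * ε := by
  intro l
  induction l with
  | nil => simp
  | cons a l ih => simp [ih]; ring

lemma lemA {n : ℕ} (hn : 1 ≤ n) (r : Fin n → Fin n → ℝ)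
    (H : ∀ c : List (Fin n), c.Nodup → 2 ≤ c.length → cycw r c < 0) :
    ∃ x : Fin n → ℝ, ∀ u v, u ≠ v → r u v < x u - x v := by
  classical
  have hnpos : (0:ℝ) < n := by exact_mod_cast hn
  obtain ⟨ε, hε, hub⟩ : ∃ ε > 0, ∀ c : List (Fin n), c.Nodup → 2 ≤ c.length →
      cycw r c + n * ε ≤ 0 := by
    set C : Set (List (Fin n)) := {c | c.Nodup ∧ 2 ≤ c.length} with hC
    have hCfin : C.Finite := (List.finite_length_le (Fin n) n).subset
      (fun l hl => by simpa using hl.1.length_le_card)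
    by_cases hCne : C.Nonempty
    · obtain ⟨c0, hc0, hmax⟩ := Finset.exists_max_image hCfin.toFinset (cycw r)
        (by rwa [Set.Finite.toFinset_nonempty])
      rw [Set.Finite.mem_toFinset] at hc0
      have hneg : cycw r c0 < 0 := H c0 hc0.1 hc0.2
      refine ⟨-cycw r c0 / n, div_pos (by linarith) hnpos, ?_⟩
      intro c h1 h2
      have hle : cycw r c ≤ cycw r c0 := hmax c (by rw [Set.Finite.mem_toFinset]; exact ⟨h1, h2⟩)
      have : (n:ℝ) * (-cycw r c0 / n) = -cycw r c0 := by field_simp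
      rw [this]; linarith
    · exact ⟨1, one_pos, fun c h1 h2 => absurd ⟨h1, h2⟩ (fun hc => hCne ⟨c, hc⟩)⟩
  obtain ⟨x, hx⟩ := lemB (fun u v => r u v + ε) (by
    intro c h1 h2
    have hub' := hub c h1 h2
    have hlen : c.length ≤ n := by simpa using h1.length_le_card
    have heq : cycw (fun u v => r u v + ε) c = cycw r c + c.length * ε := by
      show ((cpairs c).map fun p => r p.1 p.2 + ε).sum = _
      rw [sum_map_add_const (fun p => r p.1 p.2) ε (cpairs c), cpairs_length]
      rfl
    rw [heq]
    have : (c.length : ℝ) * ε ≤ n * ε := by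
      apply mul_le_mul_of_nonneg_right _ hε.le
      exact_mod_cast hlen
    linarith)
  exact ⟨x, fun u v huv => by have := hx u v huv; linarith⟩


lemma sum_map_sub_zip {α : Type*} (f : α → ℝ) :
    ∀ (l1 l2 : List α), l1.length = l2.length →
      ((l1.zip l2).map fun p => f p.1 - f p.2).sum = (l1.map f).sum - (l2.map f).sum := by
  intro l1
  induction l1 with
  | nil =>
      intro l2 h
      cases l2 with
      | nil => simp
      | cons b l2' => simp at h
  | cons a l ih =>
      intro l2 h
      cases l2 with
      | nil => simp at h
      | cons b l2' =>
          simp only [List.zip_cons_cons, List.map_cons, List.sum_cons, ih l2' (by simpa using h)]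
          ring

lemma telescope_cpairs {n : ℕ} (x : Fin n → ℝ) (c : List (Fin n)) :
    ((cpairs c).map fun p => x p.1 - x p.2).sum = 0 := by
  rw [cpairs, sum_map_sub_zip x c (c.rotate 1) (by simp)]
  rw [((c.rotate_perm 1).map x).sum_eq]
  ring

lemma list_sum_lt {α : Type*} (f g : α → ℝ) :
    ∀ l : List α, l ≠ [] → (∀ a ∈ l, f a < g a) → (l.map f).sum < (l.map g).sum := by
  intro l
  induction l with
  | nil => simp
  | cons a l ih =>
      intro _ h
      simp only [List.map_cons, List.sum_cons]
      rcases List.eq_nil_or_concat l with h0 | _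
      · subst h0; simpa using h a (by simp)
      · have hl : l ≠ [] := by rintro rfl; simp_all
        have := ih hl (fun b hb => h b (List.mem_cons_of_mem _ hb))
        have := h a (by simp)
        linarith

lemma ereal_sum_toReal {α : Type*} (g : α → EReal) :
    ∀ l : List α, (∀ a ∈ l, g a ≠ ⊥) → (∀ a ∈ l, g a ≠ ⊤) →
      (l.map g).sum = (((l.map fun a => (g a).toReal).sum : ℝ) : EReal) := by
  intro l
  induction l with
  | nil => simp
  | cons a l ih =>
      intro h1 h2
      simp only [List.map_cons, List.sum_cons,
        ih (fun b hb => h1 b (.tail _ hb)) (fun b hb => h2 b (.tail _ hb))]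
      rw [EReal.coe_add, EReal.coe_toReal (h2 a (by simp)) (h1 a (by simp))]

lemma cpairs_ne {n : ℕ} {L : List (Fin n)} (h2 : 2 ≤ L.length) (hnd : L.Nodup) :
    ∀ p ∈ cpairs L, p.1 ≠ p.2 := by
  intro p hp
  rw [cpairs] at hp
  obtain ⟨i, hi, hip⟩ := List.mem_iff_getElem.mp hp
  have hilen : i < L.length := by
    have := hi; simp [List.length_zip] at this; omega
  have hirot : i < (L.rotate 1).length := by simpa using hilen
  rw [List.getElem_zip] at hip
  have hrot := List.getElem_rotate L 1 i hirot
  intro hne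
  set j := (i + 1) % L.length with hjdef
  have hj : j < L.length := Nat.mod_lt _ (by omega)
  have heq : L[i] = L[j] := by
    have h1 : p.1 = L[i] := by rw [← hip]
    have h2' : p.2 = (L.rotate 1)[i] := by rw [← hip]
    rw [h1, h2', hrot] at hne
    exact hne
  have hij := (List.Nodup.getElem_inj_iff hnd).mp heq
  rcases Nat.lt_or_ge (i+1) L.length with h | h
  · rw [hjdef, Nat.mod_eq_of_lt h] at hij; omega
  · have h0 : j = 0 := by
      have : i + 1 = L.length := by omega
      simp [hjdef, this]
    omega

lemma assocW_ne_top {n : ℕ} {m M : Fin n → Fin n → EReal}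
    (hm : ∀ i j : Fin n, i < j → m i j ≠ ⊤)
    (hM : ∀ i j : Fin n, i < j → M i j ≠ ⊥)
    {u v : Fin n} (huv : u ≠ v) : assocW m M u v ≠ ⊤ := by
  rw [assocW]
  split
  · exact hm u v ‹u < v›
  · have hvu : v < u := by
      rcases lt_or_gt_of_ne huv with h | h
      · exact absurd h ‹¬ u < v›
      · exact h
    rw [ne_eq, EReal.neg_eq_top_iff]
    exact hM v u hvu

lemma constraint_iff {n : ℕ} (m M : Fin n → Fin n → EReal) (x : Fin n → ℝ) :
    (∀ i j : Fin n, i < j →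
        m i j < ((x i - x j : ℝ) : EReal) ∧ ((x i - x j : ℝ) : EReal) < M i j)
    ↔ ∀ u v : Fin n, u ≠ v → assocW m M u v < ((x u - x v : ℝ) : EReal) := by
  constructor
  · intro h u v huv
    rcases lt_or_gt_of_ne huv with hl | hg
    · rw [assocW, if_pos hl]; exact (h u v hl).1
    · rw [assocW, if_neg (lt_asymm hg)]
      have h2 := (h v u hg).2
      have h3 : -(M v u) < -(((x v - x u : ℝ) : EReal)) := EReal.neg_lt_neg_iff.mpr h2
      rwa [← EReal.coe_neg, neg_sub] at h3
  · intro h i j hij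
    constructor
    · have := h i j (ne_of_lt hij)
      rwa [assocW, if_pos hij] at this
    · have h1 := h j i (ne_of_gt hij)
      rw [assocW, if_neg (lt_asymm hij)] at h1
      have h2 : -(((x j - x i : ℝ) : EReal)) < M i j := EReal.neg_lt_comm.mp h1
      rwa [← EReal.coe_neg, neg_sub] at h2

lemma fwd_acyclic {n : ℕ} (m M : Fin n → Fin n → EReal)
    (hm : ∀ i j : Fin n, i < j → m i j ≠ ⊤)
    (hM : ∀ i j : Fin n, i < j → M i j ≠ ⊥)
    (x : Fin n → ℝ)
    (hedge : ∀ u v : Fin n, u ≠ v → assocW m M u v < ((x u - x v : ℝ) : EReal)) :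
    MAcyclicE (assocW m M) := by
  intro c hc
  obtain ⟨h2, hnd, hbot⟩ := hc
  have hne : ∀ p ∈ cpairs c, p.1 ≠ p.2 := cpairs_ne h2 hnd
  have htop : ∀ p ∈ cpairs c, assocW m M p.1 p.2 ≠ ⊤ :=
    fun p hp => assocW_ne_top hm hM (hne p hp)
  have hW0 := ereal_sum_toReal (fun p : Fin n × Fin n => assocW m M p.1 p.2) (cpairs c) hbot htop
  have hW : cycWeightE (assocW m M) c =
      ((((cpairs c).map fun p => (assocW m M p.1 p.2).toReal).sum : ℝ) : EReal) := hW0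
  have hcne : cpairs c ≠ [] := by
    have := cpairs_length c
    intro h; rw [h] at this; simp at this; omega
  have hreal : ((cpairs c).map fun p => (assocW m M p.1 p.2).toReal).sum < 0 := by
    have h0 := telescope_cpairs x c
    have hlt := list_sum_lt (fun p => (assocW m M p.1 p.2).toReal)
      (fun p => x p.1 - x p.2) (cpairs c) hcne ?_
    · rw [h0] at hlt; exact hlt
    · intro p hp
      have h1 := hedge p.1 p.2 (hne p hp)
      rw [← EReal.coe_toReal (htop p hp) (hbot p hp)] at h1
      exact_mod_cast h1
  rw [hW]
  exact not_le.mpr (by exact_mod_cast hreal)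

lemma fwd_conn {n : ℕ} (m M : Fin n → Fin n → EReal) (x : Fin n → ℝ)
    (hsum : ∑ i, x i = 0)
    (hedge : ∀ u v : Fin n, u ≠ v → assocW m M u v < ((x u - x v : ℝ) : EReal))
    (S : Set (Fin n → ℝ))
    (hmemS : ∀ y : Fin n → ℝ, (∑ i, y i) = 0 →
      (∀ u v : Fin n, u ≠ v → assocW m M u v < ((y u - y v : ℝ) : EReal)) → y ∈ S)
    (hbdd : Bornology.IsBounded S) :
    ∀ u v : Fin n, Relation.ReflTransGen (fun a b => assocW m M a b ≠ ⊥) u v := by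
  intro u v
  by_contra hcv
  classical
  set P : Fin n → Prop := fun a => Relation.ReflTransGen (fun a b => assocW m M a b ≠ ⊥) u a
    with hP
  have hPu : P u := Relation.ReflTransGen.refl
  have hPv : ¬ P v := hcv
  set R : Finset (Fin n) := Finset.univ.filter P with hR
  set k : ℕ := R.card with hk
  have hk1 : 1 ≤ k := Finset.card_pos.mpr ⟨u, by simp [hR, hPu]⟩
  set kc : ℕ := (Finset.univ.filter fun a => ¬ P a).card with hkc
  have hkc1 : 1 ≤ kc := Finset.card_pos.mpr ⟨v, by simp [hPv]⟩
  have hksum : k + kc = n := by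
    rw [hk, hkc, hR, Finset.card_filter_add_card_filter_not]
    simp
  set d : Fin n → ℝ := fun a => if P a then -(kc : ℝ) else (k : ℝ) with hd
  have hsumd : ∑ a, d a = 0 := by
    rw [← Finset.sum_filter_add_sum_filter_not Finset.univ P]
    have e1 : ∑ a ∈ Finset.univ.filter P, d a = ∑ a ∈ Finset.univ.filter P, -(kc:ℝ) :=
      Finset.sum_congr rfl fun a ha => by
        simp only [hd]; rw [if_pos (Finset.mem_filter.mp ha).2]
    have e2 : ∑ a ∈ Finset.univ.filter (fun a => ¬ P a), d a
        = ∑ a ∈ Finset.univ.filter (fun a => ¬ P a), (k:ℝ) :=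
      Finset.sum_congr rfl fun a ha => by
        simp only [hd]; rw [if_neg (Finset.mem_filter.mp ha).2]
    rw [e1, e2, Finset.sum_const, Finset.sum_const, ← hR, ← hk, ← hkc]
    simp only [nsmul_eq_mul]
    ring
  have hmem : ∀ t : ℝ, 0 ≤ t → (fun a => x a + t * d a) ∈ S := by
    intro t ht
    apply hmemS
    · rw [Finset.sum_add_distrib, hsum, ← Finset.mul_sum, hsumd]; ring
    · intro a b hab
      by_cases ha : P a <;> by_cases hb : P b
      · have : x a + t * d a - (x b + t * d b) = x a - x b := by
          simp only [hd, if_pos ha, if_pos hb]; ring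
        rw [this]; exact hedge a b hab
      · have hbot : assocW m M a b = ⊥ := by
          by_contra hne
          exact hb (Relation.ReflTransGen.tail ha hne)
        rw [hbot]; exact EReal.bot_lt_coe _
      · have heq : x a + t * d a - (x b + t * d b) = (x a - x b) + t * ((k:ℝ) + kc) := by
          simp only [hd, if_neg ha, if_pos hb]; ring
        rw [heq]
        refine lt_of_lt_of_le (hedge a b hab) ?_
        have : x a - x b ≤ (x a - x b) + t * ((k:ℝ) + kc) := by
          have : (0:ℝ) ≤ t * ((k:ℝ) + kc) := mul_nonneg ht (add_nonneg (Nat.cast_nonneg _) (Nat.cast_nonneg _))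
          linarith
        exact_mod_cast this
      · have : x a + t * d a - (x b + t * d b) = x a - x b := by
          simp only [hd, if_neg ha, if_neg hb]; ring
        rw [this]; exact hedge a b hab
  obtain ⟨C, hC⟩ := Metric.isBounded_iff.mp hbdd
  set t : ℝ := (|C| + 1) / k with htdef
  have hkpos : (0:ℝ) < k := by exact_mod_cast hk1
  have ht : 0 ≤ t := by positivity
  have h1 := hC (hmem t ht) (hmem 0 (le_refl 0))
  have h2 := dist_le_pi_dist (fun a => x a + t * d a) (fun a => x a + 0 * d a) v
  have h3 : dist (x v + t * d v) (x v + 0 * d v) = |C| + 1 := by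
    simp only [Real.dist_eq, hd, if_neg hPv]
    rw [show x v + t * (k:ℝ) - (x v + 0 * (k:ℝ)) = t * k by ring, htdef]
    rw [div_mul_cancel₀ _ (ne_of_gt hkpos)]
    rw [abs_of_nonneg (by positivity)]
  rw [h3] at h2
  have : |C| + 1 ≤ C := le_trans h2 h1
  have := le_abs_self C
  linarith

lemma rev_feasible {n : ℕ} (hn : 1 ≤ n) (m M : Fin n → Fin n → EReal)
    (hm : ∀ i j : Fin n, i < j → m i j ≠ ⊤)
    (hM : ∀ i j : Fin n, i < j → M i j ≠ ⊥)
    (hac : MAcyclicE (assocW m M)) :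
    ∃ x : Fin n → ℝ, ∀ u v : Fin n, u ≠ v →
      assocW m M u v < ((x u - x v : ℝ) : EReal) := by
  classical
  set B : ℝ := ∑ u : Fin n, ∑ v : Fin n, |(assocW m M u v).toReal| with hB
  have hB0 : 0 ≤ B := Finset.sum_nonneg fun u _ => Finset.sum_nonneg fun v _ => abs_nonneg _
  have hBb : ∀ u v : Fin n, |(assocW m M u v).toReal| ≤ B := by
    intro u v
    calc |(assocW m M u v).toReal|
        ≤ ∑ v' : Fin n, |(assocW m M u v').toReal| :=
          Finset.single_le_sum (f := fun v' => |(assocW m M u v').toReal|)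
            (fun i _ => abs_nonneg _) (Finset.mem_univ v)
      _ ≤ B := Finset.single_le_sum
          (f := fun u' => ∑ v' : Fin n, |(assocW m M u' v').toReal|)
          (fun i _ => Finset.sum_nonneg fun _ _ => abs_nonneg _) (Finset.mem_univ u)
  set K : ℝ := (n:ℝ) * B + 1 with hK
  set r : Fin n → Fin n → ℝ :=
    fun u v => if assocW m M u v = ⊥ then -K else (assocW m M u v).toReal with hr
  have Hstrict : ∀ c : List (Fin n), c.Nodup → 2 ≤ c.length → cycw r c < 0 := by
    intro c hnd h2
    have hlen : c.length ≤ n := by simpa using hnd.length_le_card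
    by_cases hall : ∀ p ∈ cpairs c, assocW m M p.1 p.2 ≠ ⊥
    · have hcyc : IsCycleE (assocW m M) c := ⟨h2, hnd, hall⟩
      have hlt := not_le.mp (hac c hcyc)
      have htop : ∀ p ∈ cpairs c, assocW m M p.1 p.2 ≠ ⊤ :=
        fun p hp => assocW_ne_top hm hM (cpairs_ne h2 hnd p hp)
      have hW0 := ereal_sum_toReal (fun p : Fin n × Fin n => assocW m M p.1 p.2)
        (cpairs c) hall htop
      have hW : cycWeightE (assocW m M) c =
          ((((cpairs c).map fun p => (assocW m M p.1 p.2).toReal).sum : ℝ) : EReal) := hW0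
      rw [hW] at hlt
      have hreal : ((cpairs c).map fun p => (assocW m M p.1 p.2).toReal).sum < 0 := by
        exact_mod_cast hlt
      have hEq : cycw r c = ((cpairs c).map fun p => (assocW m M p.1 p.2).toReal).sum := by
        rw [cycw]
        congr 1
        apply List.map_congr_left
        intro p hp
        simp only [hr]
        rw [if_neg (hall p hp)]
      rw [hEq]; exact hreal
    · push_neg at hall
      obtain ⟨p0, hp0, hbot⟩ := hall
      set l : List ℝ := (cpairs c).map fun p => r p.1 p.2 with hl
      have hmem : r p0.1 p0.2 ∈ l := List.mem_map_of_mem hp0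
      have hperm := List.perm_cons_erase hmem
      have hsuml : l.sum = r p0.1 p0.2 + (l.erase (r p0.1 p0.2)).sum := by
        rw [hperm.sum_eq]; simp
      have hbound : ∀ y ∈ l.erase (r p0.1 p0.2), y ≤ B := by
        intro y hy
        obtain ⟨p, hp, hpy⟩ := List.mem_map.mp (List.mem_of_mem_erase hy)
        rw [← hpy]
        by_cases hb : assocW m M p.1 p.2 = ⊥
        · simp only [hr]
          rw [if_pos hb, hK]
          nlinarith [Nat.cast_nonneg (α := ℝ) n]
        · simp only [hr]
          rw [if_neg hb]
          exact le_trans (le_abs_self _) (hBb p.1 p.2)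
      have hcard := List.sum_le_card_nsmul (l.erase (r p0.1 p0.2)) B hbound
      have hlel : (l.erase (r p0.1 p0.2)).length = l.length - 1 :=
        List.length_erase_of_mem hmem
      have hll : l.length = c.length := by rw [hl, List.length_map, cpairs_length]
      have hcast : ((l.erase (r p0.1 p0.2)).length : ℝ) ≤ (n : ℝ) := by
        rw [hlel, hll]
        exact_mod_cast le_trans (Nat.sub_le _ _) hlen
      have hsmul : ((l.erase (r p0.1 p0.2)).length : ℝ) • B ≤ (n:ℝ) * B := by
        rw [smul_eq_mul]
        exact mul_le_mul_of_nonneg_right hcast hB0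
      have herase : (l.erase (r p0.1 p0.2)).sum ≤ (n:ℝ) * B := by
        refine le_trans ?_ hsmul
        rw [Nat.cast_smul_eq_nsmul]
        exact hcard
      have hr0 : r p0.1 p0.2 = -K := by simp only [hr]; rw [if_pos hbot]
      have hEq2 : cycw r c = l.sum := rfl
      rw [hEq2, hsuml]
      have hKval : K = (n:ℝ) * B + 1 := hK
      linarith [herase]
  obtain ⟨x, hx⟩ := lemA hn r Hstrict
  refine ⟨x, fun u v huv => ?_⟩
  by_cases hb : assocW m M u v = ⊥
  · rw [hb]; exact EReal.bot_lt_coe _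
  · have h1 := hx u v huv
    rw [show r u v = (assocW m M u v).toReal by simp only [hr]; rw [if_neg hb]] at h1
    rw [← EReal.coe_toReal (assocW_ne_top hm hM huv) hb]
    exact_mod_cast h1

lemma rev_bounded {n : ℕ} (hn : 1 ≤ n) (m M : Fin n → Fin n → EReal)
    (hm : ∀ i j : Fin n, i < j → m i j ≠ ⊤)
    (hM : ∀ i j : Fin n, i < j → M i j ≠ ⊥)
    (S : Set (Fin n → ℝ))
    (hSsub : ∀ x ∈ S, (∑ i, x i) = 0 ∧
      ∀ u v : Fin n, u ≠ v → assocW m M u v < ((x u - x v : ℝ) : EReal))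
    (hconn : ∀ u v : Fin n, Relation.ReflTransGen (fun a b => assocW m M a b ≠ ⊥) u v) :
    Bornology.IsBounded S := by
  classical
  have key : ∀ {a b : Fin n}, Relation.ReflTransGen (fun a b => assocW m M a b ≠ ⊥) a b →
      ∃ dd : ℝ, ∀ x ∈ S, dd ≤ x a - x b := by
    intro a b h
    induction h with
    | refl => exact ⟨0, fun x _ => by simp⟩
    | @tail b' c' hab' hbc' ih =>
        by_cases hbc : b' = c'
        · subst hbc; exact ih
        · obtain ⟨dd, hdd⟩ := ih
          refine ⟨dd + (assocW m M b' c').toReal, ?_⟩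
          intro x hx
          have hcon := (hSsub x hx).2 b' c' hbc
          rw [← EReal.coe_toReal (assocW_ne_top hm hM hbc) hbc'] at hcon
          have h1 : (assocW m M b' c').toReal < x b' - x c' := by exact_mod_cast hcon
          have h2 := hdd x hx
          linarith
  have key' : ∀ a b : Fin n, ∃ dd : ℝ, ∀ x ∈ S, dd ≤ x a - x b :=
    fun a b => key (hconn a b)
  choose d hd using key'
  set C0 : ℝ := ∑ u : Fin n, ∑ v : Fin n, (|d u v| + |d v u|) with hC0
  have hC0nn : 0 ≤ C0 := Finset.sum_nonneg fun u _ => Finset.sum_nonneg fun v _ => by positivity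
  have hxb : ∀ x ∈ S, ∀ w : Fin n, |x w| ≤ C0 := by
    intro x hx w
    have hdiff : ∀ v : Fin n, |x w - x v| ≤ |d w v| + |d v w| := by
      intro v
      have h1 := hd w v x hx
      have h2 := hd v w x hx
      rw [abs_le]
      constructor
      · have := neg_abs_le (d w v)
        have := abs_nonneg (d v w)
        linarith
      · have := neg_abs_le (d v w)
        have := le_abs_self (d v w)
        have := abs_nonneg (d w v)
        linarith
    have hsum0 : ∑ v, (x w - x v) = (n : ℝ) * x w := by
      rw [Finset.sum_sub_distrib, (hSsub x hx).1, Finset.sum_const]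
      simp [mul_comm]
    have h1 : |∑ v, (x w - x v)| ≤ ∑ v : Fin n, (|d w v| + |d v w|) :=
      le_trans (Finset.abs_sum_le_sum_abs _ _) (Finset.sum_le_sum fun v _ => hdiff v)
    have h2 : ∑ v : Fin n, (|d w v| + |d v w|) ≤ C0 :=
      Finset.single_le_sum (f := fun u => ∑ v : Fin n, (|d u v| + |d v u|))
        (fun i _ => Finset.sum_nonneg fun _ _ => by positivity) (Finset.mem_univ w)
    rw [hsum0, abs_mul, Nat.abs_cast] at h1
    have hn1 : (1:ℝ) ≤ n := by exact_mod_cast hn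
    nlinarith [abs_nonneg (x w)]
  apply Bornology.IsBounded.subset (Metric.isBounded_closedBall (x := (0 : Fin n → ℝ)) (r := C0))
  intro x hx
  rw [Metric.mem_closedBall, dist_zero_right]
  rw [pi_norm_le_iff_of_nonneg hC0nn]
  intro i
  rw [Real.norm_eq_abs]
  exact hxb x hx i

theorem stmt1 (n : ℕ) (hn : 1 ≤ n) (m M : Fin n → Fin n → EReal)
    (hm : ∀ i j : Fin n, i < j → m i j ≠ ⊤)
    (hM : ∀ i j : Fin n, i < j → M i j ≠ ⊥)
    (hlt : ∀ i j : Fin n, i < j → m i j < M i j)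
    (S : Set (Fin n → ℝ))
    (hS : S = {x : Fin n → ℝ | (∑ i, x i) = 0 ∧
      ∀ i j : Fin n, i < j →
        m i j < ((x i - x j : ℝ) : EReal) ∧ ((x i - x j : ℝ) : EReal) < M i j}) :
    (S.Nonempty ∧ Bornology.IsBounded S) ↔
      (MAcyclicE (assocW m M) ∧
        ∀ u v : Fin n, Relation.ReflTransGen (fun a b => assocW m M a b ≠ ⊥) u v) := by
  subst hS
  constructor
  · rintro ⟨⟨x, hx⟩, hbdd⟩
    have hsum : (∑ i, x i) = 0 := hx.1
    have hedge := (constraint_iff m M x).mp hx.2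
    refine ⟨fwd_acyclic m M hm hM x hedge, ?_⟩
    exact fwd_conn m M x hsum hedge
      {x : Fin n → ℝ | (∑ i, x i) = 0 ∧
        ∀ i j : Fin n, i < j →
          m i j < ((x i - x j : ℝ) : EReal) ∧ ((x i - x j : ℝ) : EReal) < M i j}
      (fun y hy1 hy2 => ⟨hy1, (constraint_iff m M y).mpr hy2⟩) hbdd
  · rintro ⟨hac, hconn⟩
    obtain ⟨x, hx⟩ := rev_feasible hn m M hm hM hac
    set z : Fin n → ℝ := fun i => x i - (∑ j, x j) / n with hz
    have hn0 : (n:ℝ) ≠ 0 := by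
      have : (0:ℝ) < n := by exact_mod_cast hn
      linarith
    have hzsum : ∑ i, z i = 0 := by
      simp only [hz]
      rw [Finset.sum_sub_distrib, Finset.sum_const, Finset.card_univ, Fintype.card_fin,
        nsmul_eq_mul, mul_div_cancel₀ _ hn0, sub_self]
    have hzedge : ∀ u v : Fin n, u ≠ v → assocW m M u v < ((z u - z v : ℝ) : EReal) := by
      intro u v huv
      have hzz : z u - z v = x u - x v := by simp only [hz]; ring
      rw [hzz]; exact hx u v huv
    refine ⟨⟨z, ⟨hzsum, (constraint_iff m M z).mpr hzedge⟩⟩, ?_⟩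
    exact rev_bounded hn m M hm hM
      {x : Fin n → ℝ | (∑ i, x i) = 0 ∧
        ∀ i j : Fin n, i < j →
          m i j < ((x i - x j : ℝ) : EReal) ∧ ((x i - x j : ℝ) : EReal) < M i j}
      (fun y hy => ⟨hy.1, (constraint_iff m M y).mp hy.2⟩) hconn
end

section
/- Let n ≥ 1 and let w be a weight function on {1,…,n} such that for each pair of distinct indices i, j exactly one of the following holds: (i) exactly one of the directed edges i→j, j→i is present and it has weight 1, or (ii) both directed edges i→j and j→i are present, each of weight −1. If this weighted digraph contains an m-ascending directed cycle (one of nonnegative total weight), then it contains an m-ascending directed cycle of length at most 4. -/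
/-- `c` is a directed cycle of the weighted digraph `w`, an edge `u → v`
being present when `w u v ≠ ⊥` (`⊥` stands for `-∞`). -/
def IsCycle {n : ℕ} (w : Fin n → Fin n → WithBot ℝ) (c : List (Fin n)) : Prop :=
  2 ≤ c.length ∧ c.Nodup ∧ ∀ p ∈ cpairs c, w p.1 p.2 ≠ ⊥

/-- Total weight of the edges of a cycle. -/
def cycWeight {n : ℕ} (w : Fin n → Fin n → WithBot ℝ) (c : List (Fin n)) : WithBot ℝ :=
  ((cpairs c).map fun p => w p.1 p.2).sum

/-- An `m`-ascending cycle: a directed cycle of nonnegative total weight. -/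
def MAscending {n : ℕ} (w : Fin n → Fin n → WithBot ℝ) (c : List (Fin n)) : Prop :=
  IsCycle w c ∧ 0 ≤ cycWeight w c

namespace Stmt3Aux

open scoped Classical in
/-- the real weight of a present edge (1 or -1) -/
noncomputable def ew {n : ℕ} (w : Fin n → Fin n → WithBot ℝ) (i j : Fin n) : ℝ :=
  if w i j = ((1:ℝ) : WithBot ℝ) then 1 else -1

lemma ew_one {n : ℕ} {w : Fin n → Fin n → WithBot ℝ} {i j : Fin n}
    (h : w i j = ((1:ℝ) : WithBot ℝ)) : ew w i j = 1 := by
  unfold ew; rw [if_pos h]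

lemma ew_negone {n : ℕ} {w : Fin n → Fin n → WithBot ℝ} {i j : Fin n}
    (h : w i j = ((-1:ℝ) : WithBot ℝ)) : ew w i j = -1 := by
  unfold ew
  rw [if_neg]
  rw [h]
  intro hh
  rw [WithBot.coe_eq_coe] at hh
  norm_num at hh

lemma length_cpairs {n : ℕ} (l : List (Fin n)) : (cpairs l).length = l.length := by
  simp [cpairs]

lemma getElem_cpairs {n : ℕ} (l : List (Fin n)) (i : ℕ) (h1 : i < (cpairs l).length)
    (h2 : i < l.length) (h3 : (i+1) % l.length < l.length) :
    (cpairs l)[i] = (l[i], l[(i+1) % l.length]) := by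
  simp [cpairs, List.getElem_zip, List.getElem_rotate]

lemma cpairs_rotate_one {n : ℕ} (l : List (Fin n)) :
    cpairs (l.rotate 1) = (cpairs l).rotate 1 := by
  apply List.ext_getElem
  · simp [length_cpairs]
  · intro i h1 h2
    simp only [cpairs, List.getElem_zip, List.getElem_rotate, List.rotate_rotate,
      List.length_zip, List.length_rotate, min_self]
    have hidx : ((i + 1) % l.length + 1) % l.length = (i + (1 + 1)) % l.length := by
      rw [Nat.mod_add_mod]
    rw [Prod.mk.injEq]
    exact ⟨rfl, by simp only [hidx]⟩

lemma cpairs_rotate {n : ℕ} (l : List (Fin n)) (k : ℕ) :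
    cpairs (l.rotate k) = (cpairs l).rotate k := by
  induction k with
  | zero => simp
  | succ k ih =>
    rw [show l.rotate (k+1) = (l.rotate k).rotate 1 from (List.rotate_rotate l k 1).symm,
      cpairs_rotate_one, ih, List.rotate_rotate]

lemma cpairs_perm {n : ℕ} (l : List (Fin n)) (k : ℕ) :
    (cpairs (l.rotate k)).Perm (cpairs l) := by
  rw [cpairs_rotate]; exact List.rotate_perm _ _

lemma mascending_rotate {n : ℕ} {w : Fin n → Fin n → WithBot ℝ} {l : List (Fin n)}
    (h : MAscending w l) (k : ℕ) : MAscending w (l.rotate k) := by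
  refine ⟨⟨by simpa using h.1.1, List.nodup_rotate.2 h.1.2.1,
    fun p hp => h.1.2.2 p ((cpairs_perm l k).mem_iff.mp hp)⟩, ?_⟩
  have : cycWeight w (l.rotate k) = cycWeight w l :=
    List.Perm.sum_eq ((cpairs_perm l k).map _)
  rw [this]; exact h.2

variable {n : ℕ}

lemma sum_coe (w : Fin n → Fin n → WithBot ℝ) :
    ∀ (L : List (Fin n × Fin n)),
      (∀ p ∈ L, w p.1 p.2 = ((ew w p.1 p.2 : ℝ) : WithBot ℝ)) →
      (L.map fun p => w p.1 p.2).sum = (((L.map fun p => ew w p.1 p.2).sum : ℝ) : WithBot ℝ)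
  | [], _ => by simp
  | p :: L, h => by
    simp only [List.map_cons, List.sum_cons, WithBot.coe_add]
    rw [h p (by simp), sum_coe w L (fun q hq => h q (by simp [hq]))]

lemma trichotomy {w : Fin n → Fin n → WithBot ℝ}
    (hw : ∀ i j : Fin n, i < j →
      ((w i j = ((1 : ℝ) : WithBot ℝ) ∧ w j i = ⊥) ∨
       (w i j = ⊥ ∧ w j i = ((1 : ℝ) : WithBot ℝ)) ∨
       (w i j = ((-1 : ℝ) : WithBot ℝ) ∧ w j i = ((-1 : ℝ) : WithBot ℝ))))
    {i j : Fin n} (hne : i ≠ j) :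
    (w i j = ((1 : ℝ) : WithBot ℝ) ∧ w j i = ⊥) ∨
    (w i j = ⊥ ∧ w j i = ((1 : ℝ) : WithBot ℝ)) ∨
    (w i j = ((-1 : ℝ) : WithBot ℝ) ∧ w j i = ((-1 : ℝ) : WithBot ℝ)) := by
  rcases lt_or_gt_of_ne hne with h | h
  · exact hw i j h
  · rcases hw j i h with ⟨h1, h2⟩ | ⟨h1, h2⟩ | ⟨h1, h2⟩
    · exact Or.inr (Or.inl ⟨h2, h1⟩)
    · exact Or.inl ⟨h2, h1⟩
    · exact Or.inr (Or.inr ⟨h2, h1⟩)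

lemma edge_form {w : Fin n → Fin n → WithBot ℝ}
    (hw : ∀ i j : Fin n, i < j →
      ((w i j = ((1 : ℝ) : WithBot ℝ) ∧ w j i = ⊥) ∨
       (w i j = ⊥ ∧ w j i = ((1 : ℝ) : WithBot ℝ)) ∨
       (w i j = ((-1 : ℝ) : WithBot ℝ) ∧ w j i = ((-1 : ℝ) : WithBot ℝ))))
    {l : List (Fin n)} (hc : IsCycle w l) :
    ∀ p ∈ cpairs l, w p.1 p.2 = ((ew w p.1 p.2 : ℝ) : WithBot ℝ) ∧
      (ew w p.1 p.2 = 1 ∨ ew w p.1 p.2 = -1) := by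
  intro p hp
  obtain ⟨i, hi, hpe⟩ := List.mem_iff_getElem.mp hp
  have h2 : i < l.length := by rw [length_cpairs] at hi; exact hi
  have hlen2 : 2 ≤ l.length := hc.1
  have h3 : (i+1) % l.length < l.length := Nat.mod_lt _ (by omega)
  have hpe' : p = (l[i], l[(i+1) % l.length]) := by
    rw [← hpe]; exact getElem_cpairs l i hi h2 h3
  have hne : p.1 ≠ p.2 := by
    rw [hpe']
    simp only [ne_eq, (hc.2.1).getElem_inj_iff]
    rcases Nat.lt_or_ge (i+1) l.length with hlt | hge
    · rw [Nat.mod_eq_of_lt hlt]; omega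
    · have : i + 1 = l.length := by omega
      rw [this, Nat.mod_self]; omega
  have hnb : w p.1 p.2 ≠ ⊥ := hc.2.2 p hp
  rcases trichotomy hw hne with ⟨h1, _⟩ | ⟨h1, _⟩ | ⟨h1, _⟩
  · rw [ew_one h1, h1]; exact ⟨rfl, Or.inl rfl⟩
  · exact absurd h1 hnb
  · rw [ew_negone h1, h1]; exact ⟨rfl, Or.inr rfl⟩

lemma cpairs_cons4 {n : ℕ} (u x1 x2 v : Fin n) (t : List (Fin n)) :
    cpairs (u :: x1 :: x2 :: v :: t) =
      (u, x1) :: (x1, x2) :: (x2, v) :: ((v :: t).zip (t ++ [u])) := by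
  show (u :: x1 :: x2 :: v :: t).zip ((u :: x1 :: x2 :: v :: t).rotate 1) = _
  rw [List.rotate_cons_succ, List.rotate_zero]
  simp [List.zip_cons_cons]

lemma cpairs_cons2 {n : ℕ} (u v : Fin n) (t : List (Fin n)) :
    cpairs (u :: v :: t) = (u, v) :: ((v :: t).zip (t ++ [u])) := by
  show (u :: v :: t).zip ((u :: v :: t).rotate 1) = _
  rw [List.rotate_cons_succ, List.rotate_zero]
  simp [List.zip_cons_cons]

lemma cpairs_four {n : ℕ} (u x1 x2 v : Fin n) :
    cpairs [u, x1, x2, v] = [(u, x1), (x1, x2), (x2, v), (v, u)] := by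
  show ([u, x1, x2, v]).zip (([u, x1, x2, v]).rotate 1) = _
  rw [List.rotate_cons_succ, List.rotate_zero]
  simp

lemma decomp5 {n : ℕ} (L : List (Fin n)) (hL : 5 ≤ L.length) :
    ∃ u x1 x2 v t, t ≠ [] ∧ L = u :: x1 :: x2 :: v :: t := by
  match L, hL with
  | u :: x1 :: x2 :: v :: q :: t, _ => exact ⟨u, x1, x2, v, q :: t, by simp, rfl⟩
  | [], h => simp at h
  | [a], h => simp at h
  | [a,b], h => simp at h
  | [a,b,c], h => simp at h
  | [a,b,c,d], h => simp at h

lemma core {w : Fin n → Fin n → WithBot ℝ}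
    (hw : ∀ i j : Fin n, i < j →
      ((w i j = ((1 : ℝ) : WithBot ℝ) ∧ w j i = ⊥) ∨
       (w i j = ⊥ ∧ w j i = ((1 : ℝ) : WithBot ℝ)) ∨
       (w i j = ((-1 : ℝ) : WithBot ℝ) ∧ w j i = ((-1 : ℝ) : WithBot ℝ))))
    (u x1 x2 v : Fin n) (t : List (Fin n)) (ht : t ≠ [])
    (hc : MAscending w (u :: x1 :: x2 :: v :: t))
    (hmin : ∀ c', MAscending w c' → (u :: x1 :: x2 :: v :: t).length ≤ c'.length) :
    (ew w u x1 = 1 ∧ ew w x1 x2 = 1 ∧ ew w x2 v = 1 ∧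
      ((cpairs (u :: x1 :: x2 :: v :: t)).map fun p => ew w p.1 p.2).sum < 2) ∨
    (ew w u x1 = -1 ∧ ew w x1 x2 = -1 ∧ ew w x2 v = -1) := by
  have htl : 1 ≤ t.length := List.length_pos_iff.mpr ht
  have hdec := cpairs_cons4 u x1 x2 v t
  have hedge := edge_form hw hc.1
  have hcoe : ∀ p ∈ cpairs (u :: x1 :: x2 :: v :: t),
      w p.1 p.2 = ((ew w p.1 p.2 : ℝ) : WithBot ℝ) := fun p hp => (hedge p hp).1
  have hav : ew w u x1 = 1 ∨ ew w u x1 = -1 := (hedge (u, x1) (by rw [hdec]; simp)).2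
  have hbv : ew w x1 x2 = 1 ∨ ew w x1 x2 = -1 := (hedge (x1, x2) (by rw [hdec]; simp)).2
  have hdv : ew w x2 v = 1 ∨ ew w x2 v = -1 := (hedge (x2, v) (by rw [hdec]; simp)).2
  have hTmem : ∀ p ∈ (v :: t).zip (t ++ [u]), p ∈ cpairs (u :: x1 :: x2 :: v :: t) := by
    intro p hp; rw [hdec]; simp [hp]
  have hsplit : ((cpairs (u :: x1 :: x2 :: v :: t)).map fun p => ew w p.1 p.2).sum
      = ew w u x1 + (ew w x1 x2 + (ew w x2 v +
        (((v :: t).zip (t ++ [u])).map fun p => ew w p.1 p.2).sum)) := by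
    rw [hdec]; simp
  have hS : (0:ℝ) ≤ ew w u x1 + (ew w x1 x2 + (ew w x2 v +
      (((v :: t).zip (t ++ [u])).map fun p => ew w p.1 p.2).sum)) := by
    have h2 := hc.2
    rw [show cycWeight w (u :: x1 :: x2 :: v :: t)
        = ((ew w u x1 + (ew w x1 x2 + (ew w x2 v +
          (((v :: t).zip (t ++ [u])).map fun p => ew w p.1 p.2).sum)) : ℝ) : WithBot ℝ) by
      unfold cycWeight; rw [sum_coe w _ hcoe, hsplit]] at h2
    exact_mod_cast h2
  have hnd := hc.1.2.1
  have hu : u ∉ x1 :: x2 :: v :: t := (List.nodup_cons.mp hnd).1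
  have hne : u ≠ v := fun h => hu (by rw [h]; simp)
  have hsub1 : [u, x1, x2, v].Sublist (u :: x1 :: x2 :: v :: t) :=
    ((((List.nil_sublist t).cons₂ v).cons₂ x2).cons₂ x1).cons₂ u
  have hsub2 : (u :: v :: t).Sublist (u :: x1 :: x2 :: v :: t) :=
    (((List.Sublist.refl (v :: t)).cons x2).cons x1).cons₂ u
  rcases trichotomy hw hne with ⟨hy, hx⟩ | ⟨hy, hx⟩ | ⟨hy, hx⟩
  · -- w u v = 1, w v u = ⊥ : the shortcut cycle u :: v :: t is not ascending
    have hd2 := cpairs_cons2 u v t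
    have hcoe2 : ∀ p ∈ cpairs (u :: v :: t),
        w p.1 p.2 = ((ew w p.1 p.2 : ℝ) : WithBot ℝ) := by
      intro p hp
      rw [hd2] at hp
      rcases List.mem_cons.mp hp with rfl | hp'
      · show w u v = _
        rw [hy, ew_one hy]
      · exact hcoe p (hTmem p hp')
    have hcyc2 : IsCycle w (u :: v :: t) := by
      refine ⟨by simp, hsub2.nodup hnd, ?_⟩
      intro p hp
      rw [hcoe2 p hp]; exact WithBot.coe_ne_bot
    have hwt2 : cycWeight w (u :: v :: t)
        = ((1 + (((v :: t).zip (t ++ [u])).map fun p => ew w p.1 p.2).sum : ℝ) : WithBot ℝ) := by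
      unfold cycWeight
      rw [sum_coe w _ hcoe2, hd2]
      simp [ew_one hy]
    have hnasc : ¬ MAscending w (u :: v :: t) := by
      intro hA
      have := hmin _ hA
      simp only [List.length_cons, List.length_nil] at this
      omega
    have hQlt : 1 + (((v :: t).zip (t ++ [u])).map fun p => ew w p.1 p.2).sum < 0 := by
      by_contra hcon
      push_neg at hcon
      exact hnasc ⟨hcyc2, by rw [hwt2]; exact_mod_cast hcon⟩
    have ha1 : ew w u x1 = 1 := by
      rcases hav with h | h
      · exact h
      · rcases hbv with h' | h' <;> rcases hdv with h'' | h'' <;> linarith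
    have hb1 : ew w x1 x2 = 1 := by
      rcases hbv with h | h
      · exact h
      · rcases hav with h' | h' <;> rcases hdv with h'' | h'' <;> linarith
    have hd1 : ew w x2 v = 1 := by
      rcases hdv with h | h
      · exact h
      · rcases hav with h' | h' <;> rcases hbv with h'' | h'' <;> linarith
    left
    refine ⟨ha1, hb1, hd1, ?_⟩
    rw [hsplit, ha1, hb1, hd1]
    linarith
  · -- w u v = ⊥, w v u = 1 : the 4-cycle [u, x1, x2, v] is not ascending
    have hd1 := cpairs_four u x1 x2 v
    have hcoe1 : ∀ p ∈ cpairs [u, x1, x2, v],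
        w p.1 p.2 = ((ew w p.1 p.2 : ℝ) : WithBot ℝ) := by
      intro p hp
      rw [hd1] at hp
      simp only [List.mem_cons, List.not_mem_nil, or_false] at hp
      rcases hp with rfl | rfl | rfl | rfl
      · exact hcoe _ (by rw [hdec]; simp)
      · exact hcoe _ (by rw [hdec]; simp)
      · exact hcoe _ (by rw [hdec]; simp)
      · show w v u = _
        rw [hx, ew_one hx]
    have hcyc1 : IsCycle w [u, x1, x2, v] := by
      refine ⟨by simp, hsub1.nodup hnd, ?_⟩
      intro p hp
      rw [hcoe1 p hp]; exact WithBot.coe_ne_bot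
    have hwt1 : cycWeight w [u, x1, x2, v]
        = ((ew w u x1 + (ew w x1 x2 + (ew w x2 v + 1)) : ℝ) : WithBot ℝ) := by
      unfold cycWeight
      rw [sum_coe w _ hcoe1, hd1]
      simp [ew_one hx]
    have hnasc : ¬ MAscending w [u, x1, x2, v] := by
      intro hA
      have := hmin _ hA
      simp only [List.length_cons, List.length_nil] at this
      omega
    have hAlt : ew w u x1 + (ew w x1 x2 + (ew w x2 v + 1)) < 0 := by
      by_contra hcon
      push_neg at hcon
      exact hnasc ⟨hcyc1, by rw [hwt1]; exact_mod_cast hcon⟩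
    right
    refine ⟨?_, ?_, ?_⟩
    · rcases hav with h | h
      · rcases hbv with h' | h' <;> rcases hdv with h'' | h'' <;> linarith
      · exact h
    · rcases hbv with h | h
      · rcases hav with h' | h' <;> rcases hdv with h'' | h'' <;> linarith
      · exact h
    · rcases hdv with h | h
      · rcases hav with h' | h' <;> rcases hbv with h'' | h'' <;> linarith
      · exact h
  · -- tie: w u v = -1 and w v u = -1; both short cycles exist, contradiction
    exfalso
    have hd2 := cpairs_cons2 u v t
    have hcoe2 : ∀ p ∈ cpairs (u :: v :: t),
        w p.1 p.2 = ((ew w p.1 p.2 : ℝ) : WithBot ℝ) := by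
      intro p hp
      rw [hd2] at hp
      rcases List.mem_cons.mp hp with rfl | hp'
      · show w u v = _
        rw [hy, ew_negone hy]
      · exact hcoe p (hTmem p hp')
    have hcyc2 : IsCycle w (u :: v :: t) := by
      refine ⟨by simp, hsub2.nodup hnd, ?_⟩
      intro p hp
      rw [hcoe2 p hp]; exact WithBot.coe_ne_bot
    have hwt2 : cycWeight w (u :: v :: t)
        = ((-1 + (((v :: t).zip (t ++ [u])).map fun p => ew w p.1 p.2).sum : ℝ) : WithBot ℝ) := by
      unfold cycWeight
      rw [sum_coe w _ hcoe2, hd2]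
      simp [ew_negone hy]
    have hnasc2 : ¬ MAscending w (u :: v :: t) := by
      intro hA
      have := hmin _ hA
      simp only [List.length_cons, List.length_nil] at this
      omega
    have hQlt : -1 + (((v :: t).zip (t ++ [u])).map fun p => ew w p.1 p.2).sum < 0 := by
      by_contra hcon
      push_neg at hcon
      exact hnasc2 ⟨hcyc2, by rw [hwt2]; exact_mod_cast hcon⟩
    have hd1 := cpairs_four u x1 x2 v
    have hcoe1 : ∀ p ∈ cpairs [u, x1, x2, v],
        w p.1 p.2 = ((ew w p.1 p.2 : ℝ) : WithBot ℝ) := by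
      intro p hp
      rw [hd1] at hp
      simp only [List.mem_cons, List.not_mem_nil, or_false] at hp
      rcases hp with rfl | rfl | rfl | rfl
      · exact hcoe _ (by rw [hdec]; simp)
      · exact hcoe _ (by rw [hdec]; simp)
      · exact hcoe _ (by rw [hdec]; simp)
      · show w v u = _
        rw [hx, ew_negone hx]
    have hcyc1 : IsCycle w [u, x1, x2, v] := by
      refine ⟨by simp, hsub1.nodup hnd, ?_⟩
      intro p hp
      rw [hcoe1 p hp]; exact WithBot.coe_ne_bot
    have hwt1 : cycWeight w [u, x1, x2, v]
        = ((ew w u x1 + (ew w x1 x2 + (ew w x2 v + (-1))) : ℝ) : WithBot ℝ) := by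
      unfold cycWeight
      rw [sum_coe w _ hcoe1, hd1]
      simp [ew_negone hx]
    have hnasc1 : ¬ MAscending w [u, x1, x2, v] := by
      intro hA
      have := hmin _ hA
      simp only [List.length_cons, List.length_nil] at this
      omega
    have hAlt : ew w u x1 + (ew w x1 x2 + (ew w x2 v + (-1))) < 0 := by
      by_contra hcon
      push_neg at hcon
      exact hnasc1 ⟨hcyc1, by rw [hwt1]; exact_mod_cast hcon⟩
    rcases hav with h | h <;> rcases hbv with h' | h' <;> rcases hdv with h'' | h'' <;> linarith

end Stmt3Aux

open Stmt3Aux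

set_option linter.unusedVariables false in
theorem stmt3 (n : ℕ) (hn : 1 ≤ n) (w : Fin n → Fin n → WithBot ℝ)
    (hw : ∀ i j : Fin n, i < j →
      ((w i j = ((1 : ℝ) : WithBot ℝ) ∧ w j i = ⊥) ∨
       (w i j = ⊥ ∧ w j i = ((1 : ℝ) : WithBot ℝ)) ∨
       (w i j = ((-1 : ℝ) : WithBot ℝ) ∧ w j i = ((-1 : ℝ) : WithBot ℝ))))
    (hasc : ∃ c : List (Fin n), MAscending w c) :
    ∃ c : List (Fin n), MAscending w c ∧ c.length ≤ 4 := by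
  classical
  obtain ⟨c₀, hc₀⟩ := hasc
  have hex : ∃ k, ∃ c : List (Fin n), MAscending w c ∧ c.length = k :=
    ⟨c₀.length, c₀, hc₀, rfl⟩
  obtain ⟨l, hl, hlk⟩ := Nat.find_spec hex
  have hmin : ∀ c', MAscending w c' → l.length ≤ c'.length := by
    intro c' h'
    rw [hlk]
    exact Nat.find_min' hex ⟨c', h', rfl⟩
  by_cases hle : l.length ≤ 4
  · exact ⟨l, hl, hle⟩
  exfalso
  have h5 : 5 ≤ l.length := by omega
  set R := (cpairs l).map (fun p => ew w p.1 p.2) with hRdef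
  have hlenR : R.length = l.length := by
    rw [hRdef, List.length_map, length_cpairs]
  have hstep : ∀ i (hi : i + 1 < l.length),
      R[i]'(by omega) = R[i+1]'(by omega) := by
    intro i hi
    have hasc' : MAscending w (l.rotate i) := mascending_rotate hl i
    have hmin' : ∀ c', MAscending w c' → (l.rotate i).length ≤ c'.length := by
      intro c' h'; rw [List.length_rotate]; exact hmin c' h'
    obtain ⟨u, x1, x2, v, t, ht, hdc⟩ := decomp5 (l.rotate i)
      (by rw [List.length_rotate]; omega)
    rw [hdc] at hasc' hmin'
    have hcore := core hw u x1 x2 v t ht hasc' hmin'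
    have hab : ew w u x1 = ew w x1 x2 := by
      rcases hcore with ⟨h1, h2, _⟩ | ⟨h1, h2, _⟩ <;> rw [h1, h2]
    have hEW : (cpairs (l.rotate i)).map (fun p => ew w p.1 p.2) = R.rotate i := by
      rw [cpairs_rotate, List.map_rotate, hRdef]
    have hlist : R.rotate i
        = ew w u x1 :: ew w x1 x2 :: ew w x2 v ::
          (((v :: t).zip (t ++ [u])).map fun p => ew w p.1 p.2) := by
      rw [← hEW, hdc, cpairs_cons4]
      simp
    have hg0 : R[i]'(by omega) = ew w u x1 := by
      have h0 : (R.rotate i)[0]'(by rw [List.length_rotate, hlenR]; omega)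
          = ew w u x1 := by
        rw [List.getElem_of_eq hlist]
        simp
      rw [List.getElem_rotate] at h0
      rw [← h0]
      exact getElem_congr_idx (show (0 + i) % R.length = i by
        rw [Nat.zero_add, Nat.mod_eq_of_lt (by omega)]).symm
    have hg1 : R[i+1]'(by omega) = ew w x1 x2 := by
      have h1 : (R.rotate i)[1]'(by rw [List.length_rotate, hlenR]; omega)
          = ew w x1 x2 := by
        rw [List.getElem_of_eq hlist]
        simp
      rw [List.getElem_rotate] at h1
      rw [← h1]
      exact getElem_congr_idx (show (1 + i) % R.length = i + 1 by
        rw [Nat.add_comm 1 i, Nat.mod_eq_of_lt (by omega)]).symm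
    rw [hg0, hg1]
    exact hab
  have hconst : ∀ i (hi : i < l.length), R[i]'(by omega) = R[0]'(by omega) := by
    intro i
    induction i with
    | zero => intro _; rfl
    | succ k ih =>
      intro hk
      rw [← hstep k (by omega)]
      exact ih (by omega)
  have hall : ∀ x ∈ R, x = R[0]'(by omega) := by
    intro x hx
    obtain ⟨j, hj, rfl⟩ := List.mem_iff_getElem.mp hx
    exact hconst j (by omega)
  have hsum : R.sum = R.length • (R[0]'(by omega)) := List.sum_eq_card_nsmul _ _ hall
  obtain ⟨u, x1, x2, v, t, ht, hdc0⟩ := decomp5 l h5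
  have hc' := hl
  rw [hdc0] at hc'
  have hmin0 : ∀ c', MAscending w c' → (u :: x1 :: x2 :: v :: t).length ≤ c'.length := by
    rw [← hdc0]; exact hmin
  have hcore := core hw u x1 x2 v t ht hc' hmin0
  have hRl : R = ew w u x1 :: ew w x1 x2 :: ew w x2 v ::
      (((v :: t).zip (t ++ [u])).map fun p => ew w p.1 p.2) := by
    rw [hRdef, hdc0, cpairs_cons4]
    simp
  have hR0 : R[0]'(by omega) = ew w u x1 := by
    rw [List.getElem_of_eq hRl]
    simp
  have hS : (0:ℝ) ≤ R.sum := by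
    have h2 := hl.2
    rw [show cycWeight w l = ((R.sum : ℝ) : WithBot ℝ) from by
      unfold cycWeight
      rw [hRdef]
      exact sum_coe w _ (fun p hp => (edge_form hw hl.1 p hp).1)] at h2
    exact_mod_cast h2
  have hsum_eq : ((cpairs (u :: x1 :: x2 :: v :: t)).map fun p => ew w p.1 p.2).sum
      = R.sum := by rw [hRdef, hdc0]
  have h5R : (5:ℝ) ≤ (R.length : ℝ) := by
    have : (5:ℕ) ≤ R.length := by omega
    exact_mod_cast this
  rcases hcore with ⟨h1, _, _, hlt2⟩ | ⟨h1, _, _⟩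
  · rw [hsum_eq] at hlt2
    have hval : R.sum = (R.length : ℝ) := by
      rw [hsum, hR0, h1, nsmul_eq_mul, mul_one]
    linarith
  · have hval : R.sum = -(R.length : ℝ) := by
      rw [hsum, hR0, h1, nsmul_eq_mul]
      ring
    linarith
end
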